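/- Under the deterministic μ-dichotomy hypotheses with constants D ≥ 1, λ > 0 and growth rate constant η, fix ℓ ∈ ℤ⁺ and a bounded sequence (y_n) with sup ‖y_n‖ = Y. Define x_n^{(u)} := −Σ_{j=1}^{∞} φ_{ℓ+n+j}^{−1} Φ(−j, ℓ+n+j) Q_{ℓ+n+j} y_{n+j}, where Φ(−j, m) denotes the inverse of Φ(j, m−j) restricted to ker P_{m−j}, Q_m = Id − P_m, and φ_m = μ_m/(μ_{m+1}−μ_m). Then the series converges absolutely and ‖x_n^{(u)}‖ ≤ D Y η^{λ+1} / λ for all n. -/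

import Mathlib

/-- Key convexity estimate: for `0 < a ≤ b` and `lam > 0`,
`lam * (b - a) * b ^ (-lam - 1) ≤ a ^ (-lam) - b ^ (-lam)`. -/
lemma stmt17_key {lam a b : ℝ} (hlam : 0 < lam) (ha : 0 < a) (hab : a ≤ b) :
    lam * (b - a) * b ^ (-lam - 1) ≤ a ^ (-lam) - b ^ (-lam) := by
  have hb : 0 < b := lt_of_lt_of_le ha hab
  have ha' : a ≠ 0 := ha.ne'
  have hb' : b ≠ 0 := hb.ne'
  have hba : (0:ℝ) < b / a := div_pos hb ha
  have hbern : 1 + (lam + 1) * ((b - a) / a) ≤ (b / a) ^ (lam + 1) := by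
    have hs : (0:ℝ) ≤ (b - a) / a := div_nonneg (by linarith) ha.le
    have h := one_add_mul_self_le_rpow_one_add (s := (b - a) / a)
      (by linarith) (p := lam + 1) (by linarith)
    have heq : 1 + (b - a) / a = b / a := by field_simp; ring
    rwa [heq] at h
  have hsplit : (b / a) ^ (lam + 1) = (b / a) ^ lam * (b / a) := by
    rw [Real.rpow_add hba, Real.rpow_one]
  have hkey : 1 + lam * ((b - a) / b) ≤ (b / a) ^ lam := by
    have h2 := mul_le_mul_of_nonneg_right hbern (div_pos ha hb).le
    rw [hsplit] at h2
    calc 1 + lam * ((b - a) / b) = (1 + (lam + 1) * ((b - a) / a)) * (a / b) := by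
          field_simp; ring
      _ ≤ (b / a) ^ lam * (b / a) * (a / b) := h2
      _ = (b / a) ^ lam := by field_simp
  have hBpow : (0:ℝ) < b ^ (-lam) := Real.rpow_pos_of_pos hb _
  have hmul := mul_le_mul_of_nonneg_right hkey hBpow.le
  have e1 : (b / a) ^ lam * b ^ (-lam) = a ^ (-lam) := by
    rw [Real.div_rpow hb.le ha.le, Real.rpow_neg hb.le, Real.rpow_neg ha.le]
    have h1 : (0:ℝ) < a ^ lam := Real.rpow_pos_of_pos ha _
    have h2 : (0:ℝ) < b ^ lam := Real.rpow_pos_of_pos hb _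
    field_simp
  rw [e1] at hmul
  have e2 : b ^ (-lam - 1) = b ^ (-lam) / b := by
    rw [Real.rpow_sub hb, Real.rpow_one]
  rw [e2]
  have hmul' : b ^ (-lam) + lam * (b - a) * (b ^ (-lam) / b) ≤ a ^ (-lam) := by
    calc b ^ (-lam) + lam * (b - a) * (b ^ (-lam) / b)
        = (1 + lam * ((b - a) / b)) * b ^ (-lam) := by ring
      _ ≤ a ^ (-lam) := hmul
  linarith

/-- Bound on the unstable Green-function sum: the series
x_n^{(u)} = −Σ_{j≥1} φ_{ℓ+n+j}⁻¹ Φ(−j,ℓ+n+j) Q_{ℓ+n+j} y_{n+j} converges absolutely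
and ‖x_n^{(u)}‖ ≤ D Y η^{λ+1} / λ. -/
theorem stmt17 {X : Type*} [NormedAddCommGroup X] [NormedSpace ℝ X] [CompleteSpace X]
    (μ : ℕ → ℝ) (η : ℝ)
    (hpos : ∀ n, 0 < μ n)
    (hmono : StrictMono μ)
    (htend : Filter.Tendsto μ Filter.atTop Filter.atTop)
    (hη : 1 ≤ η) (hgrow : ∀ n, μ (n + 1) ≤ η * μ n)
    (P : ℕ → X →L[ℝ] X) (Ψ : ℕ → ℕ → X →L[ℝ] X)
    (D lam : ℝ) (hD : 1 ≤ D) (hlam : 0 < lam)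
    (hunstable : ∀ j m (w : X), j ≤ m →
      ‖Ψ j m (((1 : X →L[ℝ] X) - P m) w)‖ ≤ D * (μ m / μ (m - j)) ^ (-lam) * ‖w‖)
    (ℓ n : ℕ) (y : ℕ → X) (Y : ℝ) (hyb : ∀ k, ‖y k‖ ≤ Y)
    (f : ℕ → X)
    (hf : ∀ j, f j = ((μ (ℓ + n + j + 2) - μ (ℓ + n + j + 1)) / μ (ℓ + n + j + 1)) •
      Ψ (j + 1) (ℓ + n + j + 1)
        (((1 : X →L[ℝ] X) - P (ℓ + n + j + 1)) (y (n + j + 1)))) :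
    Summable (fun j : ℕ => ‖f j‖) ∧ ‖-∑' j : ℕ, f j‖ ≤ D * Y * η ^ (lam + 1) / lam := by
  have hc : 0 < μ (ℓ + n) := hpos _
  have hY : 0 ≤ Y := le_trans (norm_nonneg (y 0)) (hyb 0)
  have hη0 : (0:ℝ) < η := by linarith
  have hηpow : (0:ℝ) < η ^ (lam + 1) := Real.rpow_pos_of_pos hη0 _
  have hclam : (0:ℝ) < (μ (ℓ + n)) ^ lam := Real.rpow_pos_of_pos hc _
  set K : ℝ := D * Y * (μ (ℓ + n)) ^ lam * (η ^ (lam + 1) / lam) with hK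
  set A : ℕ → ℝ := fun j => (μ (ℓ + n + j + 1)) ^ (-lam) with hA
  have hKnn : 0 ≤ K := by
    apply mul_nonneg (mul_nonneg (mul_nonneg (by linarith) hY) hclam.le)
    positivity
  have hterm : ∀ j, ‖f j‖ ≤ K * (A j - A (j + 1)) := by
    intro j
    have ha : 0 < μ (ℓ + n + j + 1) := hpos _
    have hb0 : 0 < μ (ℓ + n + j + 2) := hpos _
    have hab : μ (ℓ + n + j + 1) < μ (ℓ + n + j + 2) := hmono (by omega)
    have hgr : μ (ℓ + n + j + 2) ≤ η * μ (ℓ + n + j + 1) := hgrow (ℓ + n + j + 1)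
    have hu := hunstable (j + 1) (ℓ + n + j + 1) (y (n + j + 1)) (by omega)
    rw [show ℓ + n + j + 1 - (j + 1) = ℓ + n from by omega] at hu
    have hu2 : ‖Ψ (j + 1) (ℓ + n + j + 1)
        (((1 : X →L[ℝ] X) - P (ℓ + n + j + 1)) (y (n + j + 1)))‖
        ≤ D * (μ (ℓ + n + j + 1) / μ (ℓ + n)) ^ (-lam) * Y := by
      refine le_trans hu ?_
      have hpq : (0:ℝ) ≤ D * (μ (ℓ + n + j + 1) / μ (ℓ + n)) ^ (-lam) := by positivity
      exact mul_le_mul_of_nonneg_left (hyb _) hpq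
    have hnorm : ‖f j‖ = ((μ (ℓ + n + j + 2) - μ (ℓ + n + j + 1)) / μ (ℓ + n + j + 1)) *
        ‖Ψ (j + 1) (ℓ + n + j + 1)
          (((1 : X →L[ℝ] X) - P (ℓ + n + j + 1)) (y (n + j + 1)))‖ := by
      rw [hf j, norm_smul, Real.norm_eq_abs,
        abs_of_nonneg (div_nonneg (by linarith) ha.le)]
    have h3 : (μ (ℓ + n + j + 1) / μ (ℓ + n)) ^ (-lam)
        = (μ (ℓ + n)) ^ lam * (μ (ℓ + n + j + 1)) ^ (-lam) := by
      rw [Real.rpow_neg (div_nonneg ha.le hc.le), Real.div_rpow ha.le hc.le,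
        Real.rpow_neg ha.le, inv_div, div_eq_mul_inv]
    have e4 : (μ (ℓ + n + j + 1)) ^ (-lam - 1)
        = (μ (ℓ + n + j + 1)) ^ (-lam) / μ (ℓ + n + j + 1) := by
      rw [Real.rpow_sub ha, Real.rpow_one]
    have h5 : (μ (ℓ + n + j + 1)) ^ (-lam - 1)
        ≤ η ^ (lam + 1) * (μ (ℓ + n + j + 2)) ^ (-lam - 1) := by
      have pa : (0:ℝ) < (μ (ℓ + n + j + 1)) ^ (lam + 1) := Real.rpow_pos_of_pos ha _
      have pb : (0:ℝ) < (μ (ℓ + n + j + 2)) ^ (lam + 1) := Real.rpow_pos_of_pos hb0 _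
      have h1 : (μ (ℓ + n + j + 2)) ^ (lam + 1)
          ≤ η ^ (lam + 1) * (μ (ℓ + n + j + 1)) ^ (lam + 1) := by
        rw [← Real.mul_rpow hη0.le ha.le]
        exact Real.rpow_le_rpow hb0.le hgr (by linarith)
      have h2 : (η ^ (lam + 1) * (μ (ℓ + n + j + 1)) ^ (lam + 1))⁻¹
          ≤ ((μ (ℓ + n + j + 2)) ^ (lam + 1))⁻¹ :=
        inv_anti₀ pb h1
      calc (μ (ℓ + n + j + 1)) ^ (-lam - 1)
          = ((μ (ℓ + n + j + 1)) ^ (lam + 1))⁻¹ := by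
            rw [show -lam - 1 = -(lam + 1) from by ring, Real.rpow_neg ha.le]
        _ = η ^ (lam + 1) * (η ^ (lam + 1) * (μ (ℓ + n + j + 1)) ^ (lam + 1))⁻¹ := by
            rw [mul_inv, ← mul_assoc, mul_inv_cancel₀ hηpow.ne', one_mul]
        _ ≤ η ^ (lam + 1) * ((μ (ℓ + n + j + 2)) ^ (lam + 1))⁻¹ :=
            mul_le_mul_of_nonneg_left h2 hηpow.le
        _ = η ^ (lam + 1) * (μ (ℓ + n + j + 2)) ^ (-lam - 1) := by
            rw [show -lam - 1 = -(lam + 1) from by ring, Real.rpow_neg hb0.le]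
    have hkey := stmt17_key (a := μ (ℓ + n + j + 1)) (b := μ (ℓ + n + j + 2)) hlam ha hab.le
    have hAj : A j - A (j + 1) = (μ (ℓ + n + j + 1)) ^ (-lam) - (μ (ℓ + n + j + 2)) ^ (-lam) := by
      simp only [hA]
      rw [show ℓ + n + (j + 1) + 1 = ℓ + n + j + 2 from by omega]
    calc ‖f j‖ = ((μ (ℓ + n + j + 2) - μ (ℓ + n + j + 1)) / μ (ℓ + n + j + 1)) *
          ‖Ψ (j + 1) (ℓ + n + j + 1)
            (((1 : X →L[ℝ] X) - P (ℓ + n + j + 1)) (y (n + j + 1)))‖ := hnorm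
      _ ≤ ((μ (ℓ + n + j + 2) - μ (ℓ + n + j + 1)) / μ (ℓ + n + j + 1)) *
          (D * (μ (ℓ + n + j + 1) / μ (ℓ + n)) ^ (-lam) * Y) :=
        mul_le_mul_of_nonneg_left hu2 (div_nonneg (by linarith) ha.le)
      _ = (D * Y * (μ (ℓ + n)) ^ lam) *
          ((μ (ℓ + n + j + 2) - μ (ℓ + n + j + 1)) * (μ (ℓ + n + j + 1)) ^ (-lam - 1)) := by
        rw [h3, e4]; ring
      _ ≤ (D * Y * (μ (ℓ + n)) ^ lam) *
          ((μ (ℓ + n + j + 2) - μ (ℓ + n + j + 1)) *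
            (η ^ (lam + 1) * (μ (ℓ + n + j + 2)) ^ (-lam - 1))) := by
        refine mul_le_mul_of_nonneg_left ?_
          (mul_nonneg (mul_nonneg (by linarith) hY) hclam.le)
        exact mul_le_mul_of_nonneg_left h5 (by linarith)
      _ = (D * Y * (μ (ℓ + n)) ^ lam * (η ^ (lam + 1) / lam)) *
          (lam * (μ (ℓ + n + j + 2) - μ (ℓ + n + j + 1)) *
            (μ (ℓ + n + j + 2)) ^ (-lam - 1)) := by
        field_simp
      _ ≤ K * (A j - A (j + 1)) := by
        rw [hK, hAj]
        exact mul_le_mul_of_nonneg_left hkey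
          (mul_nonneg (mul_nonneg (mul_nonneg (by linarith) hY) hclam.le) (by positivity))
  have hA0 : A 0 ≤ (μ (ℓ + n)) ^ (-lam) :=
    Real.rpow_le_rpow_of_nonpos hc (le_of_lt (hmono (by omega))) (by linarith)
  have hKA : K * (μ (ℓ + n)) ^ (-lam) = D * Y * η ^ (lam + 1) / lam := by
    have h1 : (μ (ℓ + n)) ^ lam * (μ (ℓ + n)) ^ (-lam) = 1 := by
      rw [← Real.rpow_add hc]; simp
    calc K * (μ (ℓ + n)) ^ (-lam)
        = D * Y * (η ^ (lam + 1) / lam) * ((μ (ℓ + n)) ^ lam * (μ (ℓ + n)) ^ (-lam)) := by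
          rw [hK]; ring
      _ = D * Y * η ^ (lam + 1) / lam := by rw [h1]; ring
  have hrange : ∀ N, ∑ i ∈ Finset.range N, ‖f i‖ ≤ D * Y * η ^ (lam + 1) / lam := by
    intro N
    have hAN : 0 ≤ A N := (Real.rpow_pos_of_pos (hpos _) _).le
    calc ∑ i ∈ Finset.range N, ‖f i‖
        ≤ ∑ i ∈ Finset.range N, K * (A i - A (i + 1)) :=
          Finset.sum_le_sum fun i _ => hterm i
      _ = K * (A 0 - A N) := by rw [← Finset.mul_sum, Finset.sum_range_sub' A N]
      _ ≤ K * (μ (ℓ + n)) ^ (-lam) :=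
          mul_le_mul_of_nonneg_left (by linarith) hKnn
      _ = D * Y * η ^ (lam + 1) / lam := hKA
  have hsummable : Summable fun j : ℕ => ‖f j‖ :=
    summable_of_sum_range_le (fun _ => norm_nonneg _) hrange
  refine ⟨hsummable, ?_⟩
  rw [norm_neg]
  calc ‖∑' j : ℕ, f j‖ ≤ ∑' j : ℕ, ‖f j‖ := norm_tsum_le_tsum_norm hsummable
    _ ≤ D * Y * η ^ (lam + 1) / lam :=
      Real.tsum_le_of_sum_range_le (fun _ => norm_nonneg _) hrange
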